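/- (Transmutation relation on I.) Let n ≥ 3, let m_1,…,m_n be half-integers, and fix j ∈ {1,…,n}. Writing r := Σ_{i=1}^n r_i and s := Σ_{i=1}^n s_i, one has Σ_{(ε,r,s) ∈ I, s ≥ 1} r!·(s−1)!·(1−ε_j)·s_j·∏_{i=1}^n π^{(ε_i)}_{r_i,s_i}(m_i) = Σ_{(ε,r,s) ∈ I, r ≥ 1} (r−1)!·s!·ε_j·r_j·∏_{i=1}^n π^{(ε_i)}_{r_i,s_i}(m_i). -/

import Mathlib

/-- Generalized binomial coefficient `binom(x,k) = x(x-1)⋯(x-k+1)/k!`. -/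
def qbinom (x : ℚ) (k : ℕ) : ℚ := (∏ i ∈ Finset.range k, (x - i)) / (Nat.factorial k)

/-- `p_{k,e}(m) = binom(m+e/2-1,k)·binom(m-e/2+k,k)`. -/
def pke (k : ℕ) (e : ℤ) (m : ℚ) : ℚ :=
  qbinom (m + (e : ℚ) / 2 - 1) k * qbinom (m - (e : ℚ) / 2 + k) k

open Classical in
/-- `π^{(ε)}_{r,s}(m) = C(r+s,s)·p_{r+s,s+1+ε}(m)` if `m-(s+1+ε)/2 ∈ ℤ`, and `0` otherwise. -/
noncomputable def piQ (r s : ℕ) (ε : ℤ) (m : ℚ) : ℚ :=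
  if ∃ z : ℤ, m - ((s : ℚ) + 1 + (ε : ℚ)) / 2 = (z : ℚ) then
    (Nat.choose (r + s) s : ℚ) * pke (r + s) ((s : ℤ) + 1 + ε) m
  else 0

/-- The index set `I`: triples `(ε, r, s)` with `ε ∈ {0,1}^n`, `r, s ∈ ℕ^n`, satisfying
`Σ ε_i = Σ r_i + 1` and `Σ (1-ε_i) = Σ s_i + 2` (these conditions force `r_i, s_i < n`,
so no tuple of `I` is lost by the bound used in the ambient finite set). -/
def Iset (n : ℕ) : Finset ((Fin n → ℤ) × (Fin n → ℕ) × (Fin n → ℕ)) :=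
  ((Fintype.piFinset fun _ : Fin n => ({0, 1} : Finset ℤ)) ×ˢ
      ((Fintype.piFinset fun _ : Fin n => Finset.range n) ×ˢ
        (Fintype.piFinset fun _ : Fin n => Finset.range n))).filter
    fun t => (∑ i, t.1 i) = (∑ i, (t.2.1 i : ℤ)) + 1 ∧
      (∑ i, (1 - t.1 i)) = (∑ i, (t.2.2 i : ℤ)) + 2

/-- The index set `I^{(e₁,e₂)}`: as `I`, but with `ε_1 = e₁` and `ε_2 = e₂` fixed
(possibly equal to `-1`), and `ε_i ∈ {0,1}` for `i ≥ 3`. -/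
def IsetE (n : ℕ) (e₁ e₂ : ℤ) : Finset ((Fin n → ℤ) × (Fin n → ℕ) × (Fin n → ℕ)) :=
  ((Fintype.piFinset fun _ : Fin n => ({-1, 0, 1} : Finset ℤ)) ×ˢ
      ((Fintype.piFinset fun _ : Fin n => Finset.range n) ×ˢ
        (Fintype.piFinset fun _ : Fin n => Finset.range n))).filter
    fun t =>
      (∀ i : Fin n, (i.val = 0 → t.1 i = e₁) ∧ (i.val = 1 → t.1 i = e₂) ∧
        (2 ≤ i.val → t.1 i = 0 ∨ t.1 i = 1)) ∧
      (∑ i, t.1 i) = (∑ i, (t.2.1 i : ℤ)) + 1 ∧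
      (∑ i, (1 - t.1 i)) = (∑ i, (t.2.2 i : ℤ)) + 2

lemma keyA (r k : ℕ) (mm : ℚ) :
    ((k:ℚ)+1) * piQ r (k+1) 0 mm = ((r:ℚ)+1) * piQ (r+1) k 1 mm := by
  unfold piQ
  have hc : (((k+1:ℕ)):ℚ) + 1 + ((0:ℤ):ℚ) = ((k:ℕ):ℚ) + 1 + ((1:ℤ):ℚ) := by push_cast; ring
  have he : ((k+1:ℕ):ℤ) + 1 + 0 = (k:ℤ) + 1 + 1 := by push_cast; ring
  have hk : r + (k+1) = (r+1) + k := by omega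
  rw [hc, he, hk]
  split_ifs with h
  · have hch : Nat.choose (r+1+k) (k+1) * (k+1) = Nat.choose (r+1+k) k * (r+1) := by
      have := Nat.choose_succ_right_eq (r+1+k) k
      have h2 : r+1+k-k = r+1 := by omega
      rw [h2] at this; exact this
    have h3 : ((Nat.choose (r+1+k) (k+1)):ℚ) * ((k:ℚ)+1) = ((Nat.choose (r+1+k) k):ℚ) * ((r:ℚ)+1) := by
      exact_mod_cast hch
    push_cast
    linear_combination (pke (r+1+k) ((k:ℤ)+1+1) mm) * h3
  · ring

lemma mem_Iset_iff {n : ℕ} (t : (Fin n → ℤ) × (Fin n → ℕ) × (Fin n → ℕ)) :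
    t ∈ Iset n ↔ (∀ i, t.1 i = 0 ∨ t.1 i = 1) ∧ (∀ i, t.2.1 i < n) ∧ (∀ i, t.2.2 i < n) ∧
      (∑ i, t.1 i) = (∑ i, (t.2.1 i : ℤ)) + 1 ∧
      (∑ i, (1 - t.1 i)) = (∑ i, (t.2.2 i : ℤ)) + 2 := by
  simp [Iset, Finset.mem_filter, Finset.mem_product, Fintype.mem_piFinset, and_assoc]

lemma sum_update_nat {n : ℕ} (v : Fin n → ℕ) (j : Fin n) (c : ℕ) :
    (∑ i, Function.update v j c i) + v j = (∑ i, v i) + c := by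
  rw [Finset.sum_update_of_mem (Finset.mem_univ j),
    Finset.sdiff_singleton_eq_erase, ← Finset.add_sum_erase Finset.univ v (Finset.mem_univ j)]
  ring

lemma sum_update_int {n : ℕ} (v : Fin n → ℤ) (j : Fin n) (c : ℤ) :
    (∑ i, Function.update v j c i) = (∑ i, v i) - v j + c := by
  rw [Finset.sum_update_of_mem (Finset.mem_univ j),
    Finset.sdiff_singleton_eq_erase, ← Finset.add_sum_erase Finset.univ v (Finset.mem_univ j)]
  ring

lemma sum_cast_update {n : ℕ} (v : Fin n → ℕ) (j : Fin n) (c : ℕ) :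
    (∑ i, ((Function.update v j c i : ℕ) : ℤ)) = (∑ i, (v i : ℤ)) - (v j : ℤ) + (c : ℤ) := by
  have h1 : (∑ i, ((Function.update v j c i : ℕ) : ℤ))
      = ((∑ i, Function.update v j c i : ℕ) : ℤ) := by push_cast; rfl
  have h2 := sum_update_nat v j c
  have h4 : (∑ i, (v i : ℤ)) = ((∑ i, v i : ℕ) : ℤ) := by push_cast; rfl
  rw [h1, h4]
  omega

lemma Iset_total {n : ℕ} {t : (Fin n → ℤ) × (Fin n → ℕ) × (Fin n → ℕ)} (ht : t ∈ Iset n) :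
    (∑ i, (t.2.1 i : ℤ)) + (∑ i, (t.2.2 i : ℤ)) = (n : ℤ) - 3 := by
  rw [mem_Iset_iff] at ht
  obtain ⟨-, -, -, h1, h2⟩ := ht
  have h3 : (∑ i : Fin n, ((1:ℤ) - t.1 i)) = (∑ i : Fin n, (1:ℤ)) - ∑ i, t.1 i :=
    Finset.sum_sub_distrib _ _
  have h4 : (∑ i : Fin n, (1:ℤ)) = n := by simp
  rw [h3, h4, h1] at h2
  linarith
lemma sum_one_sub {n : ℕ} (v : Fin n → ℤ) : ∑ i, ((1:ℤ) - v i) = (n:ℤ) - ∑ i, v i := by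
  rw [Finset.sum_sub_distrib]; simp

noncomputable def FL (N : ℕ) (m : Fin (N+3) → ℚ) (j : Fin (N+3))
    (t : (Fin (N+3) → ℤ) × (Fin (N+3) → ℕ) × (Fin (N+3) → ℕ)) : ℚ :=
  (Nat.factorial (∑ i, t.2.1 i) : ℚ) * (Nat.factorial ((∑ i, t.2.2 i) - 1) : ℚ) *
    (1 - (t.1 j : ℚ)) * (t.2.2 j : ℚ) * ∏ i, piQ (t.2.1 i) (t.2.2 i) (t.1 i) (m i)

noncomputable def FR (N : ℕ) (m : Fin (N+3) → ℚ) (j : Fin (N+3))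
    (t : (Fin (N+3) → ℤ) × (Fin (N+3) → ℕ) × (Fin (N+3) → ℕ)) : ℚ :=
  (Nat.factorial ((∑ i, t.2.1 i) - 1) : ℚ) * (Nat.factorial (∑ i, t.2.2 i) : ℚ) *
    (t.1 j : ℚ) * (t.2.1 j : ℚ) * ∏ i, piQ (t.2.1 i) (t.2.2 i) (t.1 i) (m i)

theorem stmt13 (N : ℕ) (m : Fin (N + 3) → ℚ) (hm : ∀ i, ∃ z : ℤ, 2 * m i = (z : ℚ))
    (j : Fin (N + 3)) :
    (∑ t ∈ (Iset (N + 3)).filter fun t => 1 ≤ ∑ i, t.2.2 i,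
        (Nat.factorial (∑ i, t.2.1 i) : ℚ) * (Nat.factorial ((∑ i, t.2.2 i) - 1) : ℚ) *
          (1 - (t.1 j : ℚ)) * (t.2.2 j : ℚ) * ∏ i, piQ (t.2.1 i) (t.2.2 i) (t.1 i) (m i)) =
      ∑ t ∈ (Iset (N + 3)).filter fun t => 1 ≤ ∑ i, t.2.1 i,
        (Nat.factorial ((∑ i, t.2.1 i) - 1) : ℚ) * (Nat.factorial (∑ i, t.2.2 i) : ℚ) *
          (t.1 j : ℚ) * (t.2.1 j : ℚ) * ∏ i, piQ (t.2.1 i) (t.2.2 i) (t.1 i) (m i) := by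
  classical
  show (∑ t ∈ (Iset (N + 3)).filter fun t => 1 ≤ ∑ i, t.2.2 i, FL N m j t)
      = ∑ t ∈ (Iset (N + 3)).filter fun t => 1 ≤ ∑ i, t.2.1 i, FR N m j t
  have hL : (∑ t ∈ (Iset (N + 3)).filter fun t => 1 ≤ ∑ i, t.2.2 i, FL N m j t)
      = ∑ t ∈ (Iset (N + 3)).filter (fun t => t.1 j = 0 ∧ 1 ≤ t.2.2 j), FL N m j t := by
    rw [Finset.sum_filter, Finset.sum_filter]
    refine Finset.sum_congr rfl fun t ht => ?_
    rw [mem_Iset_iff] at ht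
    split_ifs with h1 h2 h2
    · rfl
    · by_cases h0 : t.1 j = 0
      · have hs : t.2.2 j = 0 := by omega
        simp [FL, hs]
      · have h1' : t.1 j = 1 := (ht.1 j).resolve_left h0
        simp [FL, h1']
    · exact absurd (le_trans h2.2
        (Finset.single_le_sum (fun i _ => Nat.zero_le _) (Finset.mem_univ j))) h1
    · rfl
  have hR : (∑ t ∈ (Iset (N + 3)).filter fun t => 1 ≤ ∑ i, t.2.1 i, FR N m j t)
      = ∑ t ∈ (Iset (N + 3)).filter (fun t => t.1 j = 1 ∧ 1 ≤ t.2.1 j), FR N m j t := by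
    rw [Finset.sum_filter, Finset.sum_filter]
    refine Finset.sum_congr rfl fun t ht => ?_
    rw [mem_Iset_iff] at ht
    split_ifs with h1 h2 h2
    · rfl
    · by_cases h0 : t.1 j = 1
      · have hs : t.2.1 j = 0 := by omega
        simp [FR, hs]
      · have h1' : t.1 j = 0 := (ht.1 j).resolve_right h0
        simp [FR, h1']
    · exact absurd (le_trans h2.2
        (Finset.single_le_sum (fun i _ => Nat.zero_le _) (Finset.mem_univ j))) h1
    · rfl
  rw [hL, hR]
  refine Finset.sum_nbij'
    (fun t => (Function.update t.1 j 1, Function.update t.2.1 j (t.2.1 j + 1),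
      Function.update t.2.2 j (t.2.2 j - 1)))
    (fun t => (Function.update t.1 j 0, Function.update t.2.1 j (t.2.1 j - 1),
      Function.update t.2.2 j (t.2.2 j + 1))) ?_ ?_ ?_ ?_ ?_
  · -- forward membership
    intro t ht
    have htot := Iset_total (Finset.mem_filter.mp ht).1
    rw [Finset.mem_filter, mem_Iset_iff] at ht
    obtain ⟨⟨hε, hr, hs, hc1, hc2⟩, hεj, hsj⟩ := ht
    have hrle : (t.2.1 j : ℤ) ≤ ∑ i, (t.2.1 i : ℤ) :=
      Finset.single_le_sum (fun i _ => Int.natCast_nonneg _) (Finset.mem_univ j)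
    have hsle : (t.2.2 j : ℤ) ≤ ∑ i, (t.2.2 i : ℤ) :=
      Finset.single_le_sum (fun i _ => Int.natCast_nonneg _) (Finset.mem_univ j)
    rw [Finset.mem_filter, mem_Iset_iff]
    simp only []
    refine ⟨⟨?_, ?_, ?_, ?_, ?_⟩, ?_, ?_⟩
    · intro i
      rcases eq_or_ne i j with rfl | h
      · right; simp
      · rw [Function.update_of_ne h]; exact hε i
    · intro i
      rcases eq_or_ne i j with rfl | h
      · rw [Function.update_self]
        have : (t.2.1 i : ℤ) + 1 < (N : ℤ) + 3 := by omega
        omega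
      · rw [Function.update_of_ne h]; exact hr i
    · intro i
      rcases eq_or_ne i j with rfl | h
      · rw [Function.update_self]
        have := hs i; omega
      · rw [Function.update_of_ne h]; exact hs i
    · rw [sum_update_int, sum_cast_update]
      omega
    · rw [sum_one_sub, sum_update_int, sum_cast_update]
      rw [sum_one_sub] at hc2
      push_cast
      omega
    · simp
    · rw [Function.update_self]; omega
  · -- backward membership
    intro t ht
    have htot := Iset_total (Finset.mem_filter.mp ht).1
    rw [Finset.mem_filter, mem_Iset_iff] at ht
    obtain ⟨⟨hε, hr, hs, hc1, hc2⟩, hεj, hrj⟩ := ht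
    have hrle : (t.2.1 j : ℤ) ≤ ∑ i, (t.2.1 i : ℤ) :=
      Finset.single_le_sum (fun i _ => Int.natCast_nonneg _) (Finset.mem_univ j)
    have hsle : (t.2.2 j : ℤ) ≤ ∑ i, (t.2.2 i : ℤ) :=
      Finset.single_le_sum (fun i _ => Int.natCast_nonneg _) (Finset.mem_univ j)
    rw [Finset.mem_filter, mem_Iset_iff]
    simp only []
    refine ⟨⟨?_, ?_, ?_, ?_, ?_⟩, ?_, ?_⟩
    · intro i
      rcases eq_or_ne i j with rfl | h
      · left; simp
      · rw [Function.update_of_ne h]; exact hε i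
    · intro i
      rcases eq_or_ne i j with rfl | h
      · rw [Function.update_self]
        have := hr i; omega
      · rw [Function.update_of_ne h]; exact hr i
    · intro i
      rcases eq_or_ne i j with rfl | h
      · rw [Function.update_self]
        have : (t.2.2 i : ℤ) + 1 < (N : ℤ) + 3 := by omega
        omega
      · rw [Function.update_of_ne h]; exact hs i
    · rw [sum_update_int, sum_cast_update]
      omega
    · rw [sum_one_sub, sum_update_int, sum_cast_update]
      rw [sum_one_sub] at hc2
      push_cast
      omega
    · simp
    · rw [Function.update_self]; omega
  · -- left inverse
    intro t ht
    simp only []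
    rw [Finset.mem_filter] at ht
    obtain ⟨-, hεj, hsj⟩ := ht
    refine Prod.ext ?_ (Prod.ext ?_ ?_)
    · show Function.update (Function.update t.1 j 1) j 0 = t.1
      rw [Function.update_idem, show (0:ℤ) = t.1 j from hεj.symm, Function.update_eq_self]
    · show Function.update _ j _ = t.2.1
      simp only [Function.update_self, Function.update_idem, Nat.add_sub_cancel,
        Function.update_eq_self]
    · show Function.update _ j _ = t.2.2
      simp only [Function.update_self, Function.update_idem]
      rw [Nat.sub_add_cancel hsj, Function.update_eq_self]
  · -- right inverse
    intro t ht
    simp only []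
    rw [Finset.mem_filter] at ht
    obtain ⟨-, hεj, hrj⟩ := ht
    refine Prod.ext ?_ (Prod.ext ?_ ?_)
    · show Function.update (Function.update t.1 j 0) j 1 = t.1
      rw [Function.update_idem, show (1:ℤ) = t.1 j from hεj.symm, Function.update_eq_self]
    · show Function.update _ j _ = t.2.1
      simp only [Function.update_self, Function.update_idem]
      rw [Nat.sub_add_cancel hrj, Function.update_eq_self]
    · show Function.update _ j _ = t.2.2
      simp only [Function.update_self, Function.update_idem, Nat.add_sub_cancel,
        Function.update_eq_self]
  · -- term equality
    intro t ht
    rw [Finset.mem_filter, mem_Iset_iff] at ht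
    obtain ⟨⟨hε, hr, hs, hc1, hc2⟩, hεj, hsj⟩ := ht
    have hsle : t.2.2 j ≤ ∑ i, t.2.2 i :=
      Finset.single_le_sum (fun i _ => Nat.zero_le _) (Finset.mem_univ j)
    have hr' : (∑ i, Function.update t.2.1 j (t.2.1 j + 1) i) = (∑ i, t.2.1 i) + 1 := by
      have := sum_update_nat t.2.1 j (t.2.1 j + 1); omega
    have hs' : (∑ i, Function.update t.2.2 j (t.2.2 j - 1) i) = (∑ i, t.2.2 i) - 1 := by
      have := sum_update_nat t.2.2 j (t.2.2 j - 1); omega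
    obtain ⟨k, hk⟩ : ∃ k, t.2.2 j = k + 1 := ⟨t.2.2 j - 1, by omega⟩
    have hP : (∏ i, piQ (t.2.1 i) (t.2.2 i) (t.1 i) (m i))
        = piQ (t.2.1 j) (t.2.2 j) (t.1 j) (m j) *
          ∏ i ∈ Finset.univ.erase j, piQ (t.2.1 i) (t.2.2 i) (t.1 i) (m i) :=
      (Finset.mul_prod_erase _ _ (Finset.mem_univ j)).symm
    have hP' : (∏ i, piQ (Function.update t.2.1 j (t.2.1 j + 1) i)
          (Function.update t.2.2 j (t.2.2 j - 1) i) (Function.update t.1 j 1 i) (m i))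
        = piQ (t.2.1 j + 1) (t.2.2 j - 1) 1 (m j) *
          ∏ i ∈ Finset.univ.erase j, piQ (t.2.1 i) (t.2.2 i) (t.1 i) (m i) := by
      rw [← Finset.mul_prod_erase _ _ (Finset.mem_univ j)]
      congr 1
      · rw [Function.update_self, Function.update_self, Function.update_self]
      · refine Finset.prod_congr rfl fun i hi => ?_
        have h := Finset.ne_of_mem_erase hi
        rw [Function.update_of_ne h, Function.update_of_ne h, Function.update_of_ne h]
    have hkey := keyA (t.2.1 j) k (m j)
    have hfac : (∑ i, t.2.1 i) + 1 - 1 = ∑ i, t.2.1 i := by omega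
    have hk1 : k + 1 - 1 = k := by omega
    simp only [FL, FR, Function.update_self]
    rw [hP', hr', hs', hP, hεj, hk, hfac, hk1]
    push_cast
    linear_combination ((Nat.factorial (∑ i, t.2.1 i) : ℚ) *
      (Nat.factorial ((∑ i, t.2.2 i) - 1) : ℚ) *
      ∏ i ∈ Finset.univ.erase j, piQ (t.2.1 i) (t.2.2 i) (t.1 i) (m i)) * hkey
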